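/- Let n ≥ 1 and for j = 1, …, n let A_j : ℝ → Mat₂(ℝ) be differentiable matrix curves with det A_j(t) = 1 for all t. Fix t ∈ ℝ and v ∈ ℝ² \ {0}. Set P_0(t) := I, P_j(t) := A_j(t) ⋯ A_1(t), M(t) := P_n(t), and let u_{j−1} := P_{j−1}(t)v / ‖P_{j−1}(t)v‖. Then ((M(t)v) ∧ (M'(t)v)) / ‖M(t)v‖² = Σ_{j=1}^{n} (‖P_j(t)v‖ / ‖M(t)v‖)² · ((A_j(t)u_{j−1}) ∧ (A_j'(t)u_{j−1})) / ‖A_j(t)u_{j−1}‖², where M'(t) is the derivative of the product curve M at t. -/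

import Mathlib

open Matrix Filter Topology

noncomputable section

/-- The wedge product `u ∧ w := u₁w₂ − u₂w₁` of two vectors in `ℝ²`. -/
def wedge (u w : Fin 2 → ℝ) : ℝ := u 0 * w 1 - u 1 * w 0

/-- The Euclidean norm on `ℝ²`. -/
def vnorm (v : Fin 2 → ℝ) : ℝ := Real.sqrt (v 0 ^ 2 + v 1 ^ 2)

lemma wedge_mulVec_left (B : Matrix (Fin 2) (Fin 2) ℝ) (u w : Fin 2 → ℝ) :
    wedge (B.mulVec u) (B.mulVec w) = B.det * wedge u w := by
  simp [wedge, Matrix.mulVec, dotProduct, Matrix.det_fin_two, Fin.sum_univ_two]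
  ring

lemma vnorm_sq (w : Fin 2 → ℝ) : vnorm w ^ 2 = w 0 ^ 2 + w 1 ^ 2 := by
  rw [vnorm, Real.sq_sqrt]; positivity

lemma vnorm_sq_ne (w : Fin 2 → ℝ) (hw : w ≠ 0) : w 0 ^ 2 + w 1 ^ 2 ≠ 0 := by
  have h : w 0 ≠ 0 ∨ w 1 ≠ 0 := by
    by_contra h; push_neg at h; apply hw; funext i; fin_cases i <;> simp [h.1, h.2]
  rcases h with h | h <;> positivity

lemma Pstep (A : ℕ → ℝ → Matrix (Fin 2) (Fin 2) ℝ) (n : ℕ) (s : ℝ) :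
    (List.ofFn fun i : Fin (n+1) => A (i:ℕ) s).reverse.prod
      = A n s * (List.ofFn fun i : Fin n => A (i:ℕ) s).reverse.prod := by
  rw [List.ofFn_succ', List.concat_eq_append, List.reverse_append, List.reverse_singleton,
    List.singleton_append, List.prod_cons]
  simp

lemma detP (A : ℕ → ℝ → Matrix (Fin 2) (Fin 2) ℝ)
    (P : ℕ → ℝ → Matrix (Fin 2) (Fin 2) ℝ)
    (hP : ∀ j s, P j s = (List.ofFn fun i : Fin j => A (i : ℕ) s).reverse.prod) (t : ℝ) :
    ∀ j, (∀ i < j, ∀ s, (A i s).det = 1) → (P j t).det = 1 := by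
  intro j
  induction j with
  | zero => intro _; rw [hP]; simp
  | succ m ih =>
      intro h
      have h1 : P (m+1) t = A m t * P m t := by rw [hP, hP, Pstep]
      rw [h1, Matrix.det_mul, h m (Nat.lt_succ_self m) t,
        ih (fun i hi => h i (hi.trans (Nat.lt_succ_self m))), one_mul]

lemma auxD (A : ℕ → ℝ → Matrix (Fin 2) (Fin 2) ℝ) (A' : ℕ → Matrix (Fin 2) (Fin 2) ℝ)
    (t : ℝ) (v : Fin 2 → ℝ) (P : ℕ → ℝ → Matrix (Fin 2) (Fin 2) ℝ)
    (hP : ∀ j s, P j s = (List.ofFn fun i : Fin j => A (i : ℕ) s).reverse.prod) :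
    ∀ n : ℕ, (∀ j < n, ∀ i k, HasDerivAt (fun s => A j s i k) (A' j i k) t) →
    (∀ j < n, ∀ s : ℝ, (A j s).det = 1) →
    ∃ D : Matrix (Fin 2) (Fin 2) ℝ,
      (∀ i k, HasDerivAt (fun s => P n s i k) (D i k) t) ∧
      wedge ((P n t).mulVec v) (D.mulVec v) =
        ∑ j ∈ Finset.range n,
          wedge ((A j t).mulVec ((P j t).mulVec v)) ((A' j).mulVec ((P j t).mulVec v)) := by
  intro n
  induction n with
  | zero =>
      intro _ _
      refine ⟨0, fun i k => ?_, by simp [wedge]⟩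
      have h1 : (fun s => P 0 s i k) = fun _ : ℝ => (1 : Matrix (Fin 2) (Fin 2) ℝ) i k := by
        funext s; rw [hP]; simp
      rw [h1]
      simpa using hasDerivAt_const t ((1 : Matrix (Fin 2) (Fin 2) ℝ) i k)
  | succ n ih =>
      intro hd hdet
      obtain ⟨D, hD, hw⟩ := ih (fun j hj i k => hd j (hj.trans (Nat.lt_succ_self n)) i k)
        (fun j hj s => hdet j (hj.trans (Nat.lt_succ_self n)) s)
      refine ⟨A' n * P n t + A n t * D, ?_, ?_⟩
      · intro i k
        have key : (fun s => P (n+1) s i k) = fun s => ∑ l, A n s i l * P n s l k := by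
          funext s
          rw [hP (n+1), Pstep, ← hP n, Matrix.mul_apply]
        have h2 : (A' n * P n t + A n t * D) i k
            = ∑ l, (A' n i l * P n t l k + A n t i l * D l k) := by
          simp [Matrix.add_apply, Matrix.mul_apply, Finset.sum_add_distrib]
        rw [key, h2]
        exact HasDerivAt.fun_sum fun l _ => (hd n (Nat.lt_succ_self n) i l).mul (hD l k)
      · have hPn1 : P (n+1) t = A n t * P n t := by rw [hP, hP, Pstep]
        have addR : ∀ u a b : Fin 2 → ℝ, wedge u (a + b) = wedge u a + wedge u b := by
          intro u a b; simp [wedge]; ring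
        rw [Finset.sum_range_succ, ← hw, hPn1, Matrix.add_mulVec,
          ← Matrix.mulVec_mulVec, ← Matrix.mulVec_mulVec, ← Matrix.mulVec_mulVec, addR,
          wedge_mulVec_left, hdet n (Nat.lt_succ_self n) t, one_mul]
        ring

/-- Formula for the winding velocity of a product of `SL₂(ℝ)` curves.
Here `A 0, …, A (n-1)` are the curves (paper's `A_1, …, A_n`), `A' j` is the derivative
of `A j` at the fixed time `t`, `P j s = A (j-1) s ⋯ A 0 s` (with `P 0 s = I`) are the
partial products, `M = P n` is the full product, `M'` is the entrywise derivative of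
`P n` at `t`, and `u_{j} := P j t v / ‖P j t v‖` are the normalized images of `v`. -/
theorem stmt_2 (n : ℕ) (hn : 1 ≤ n) (A : ℕ → ℝ → Matrix (Fin 2) (Fin 2) ℝ)
    (A' : ℕ → Matrix (Fin 2) (Fin 2) ℝ) (t : ℝ)
    (hdet : ∀ j < n, ∀ s : ℝ, (A j s).det = 1)
    (hderiv : ∀ j < n, ∀ i k, HasDerivAt (fun s => A j s i k) (A' j i k) t)
    (P : ℕ → ℝ → Matrix (Fin 2) (Fin 2) ℝ)
    (hP : ∀ j s, P j s = (List.ofFn fun i : Fin j => A (i : ℕ) s).reverse.prod)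
    (M' : Matrix (Fin 2) (Fin 2) ℝ)
    (hM' : ∀ i k, HasDerivAt (fun s => P n s i k) (M' i k) t)
    (v : Fin 2 → ℝ) (hv : v ≠ 0) :
    wedge ((P n t).mulVec v) (M'.mulVec v) / vnorm ((P n t).mulVec v) ^ 2 =
      ∑ j ∈ Finset.range n,
        (vnorm ((P (j + 1) t).mulVec v) / vnorm ((P n t).mulVec v)) ^ 2 *
          (wedge ((A j t).mulVec ((vnorm ((P j t).mulVec v))⁻¹ • (P j t).mulVec v))
              ((A' j).mulVec ((vnorm ((P j t).mulVec v))⁻¹ • (P j t).mulVec v)) /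
            vnorm ((A j t).mulVec ((vnorm ((P j t).mulVec v))⁻¹ • (P j t).mulVec v)) ^ 2) := by
  obtain ⟨D, hD, hw⟩ := auxD A A' t v P hP n hderiv hdet
  have hMD : M' = D := by
    ext i k; exact (hM' i k).unique (hD i k)
  have hwne : ∀ j, j ≤ n → (P j t).mulVec v ≠ 0 := by
    intro j hj h0
    have hdetj : (P j t).det = 1 :=
      detP A P hP t j (fun i hi s => hdet i (lt_of_lt_of_le hi hj) s)
    have hu : IsUnit (P j t).det := by rw [hdetj]; exact isUnit_one
    apply hv
    have h1 : (P j t)⁻¹.mulVec ((P j t).mulVec v) = v := by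
      rw [Matrix.mulVec_mulVec, Matrix.nonsing_inv_mul _ hu, Matrix.one_mulVec]
    rw [h0] at h1
    rw [← h1, Matrix.mulVec_zero]
  have hMne := hwne n le_rfl
  have hMN : vnorm ((P n t).mulVec v) ^ 2 ≠ 0 := by
    rw [vnorm_sq]; exact vnorm_sq_ne _ hMne
  rw [hMD, hw, Finset.sum_div]
  refine Finset.sum_congr rfl fun j hj => ?_
  rw [Finset.mem_range] at hj
  set w : Fin 2 → ℝ := (P j t).mulVec v with hwdef
  have hwj : w ≠ 0 := hwne j hj.le
  have hNw : vnorm w ^ 2 ≠ 0 := by rw [vnorm_sq]; exact vnorm_sq_ne _ hwj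
  have hvnw : vnorm w ≠ 0 := by
    intro h; apply hNw; rw [h]; ring
  have hAw : (P (j+1) t).mulVec v = (A j t).mulVec w := by
    rw [hP (j+1), Pstep, ← hP j, ← Matrix.mulVec_mulVec]
  have hwj1 : (A j t).mulVec w ≠ 0 := by rw [← hAw]; exact hwne (j+1) hj
  have hNw1 : vnorm ((A j t).mulVec w) ^ 2 ≠ 0 := by
    rw [vnorm_sq]; exact vnorm_sq_ne _ hwj1
  have hsm : ∀ B : Matrix (Fin 2) (Fin 2) ℝ,
      B.mulVec ((vnorm w)⁻¹ • w) = (vnorm w)⁻¹ • B.mulVec w := by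
    intro B
    funext i
    simp [Matrix.mulVec, dotProduct, Fin.sum_univ_two, Pi.smul_apply, smul_eq_mul]
    fin_cases i <;> simp only [Fin.zero_eta, Fin.mk_one, Matrix.cons_val_zero, Matrix.cons_val_one, Matrix.head_cons] <;> ring
  have hwsm : ∀ a b : Fin 2 → ℝ, ∀ c : ℝ,
      wedge (c • a) (c • b) = c ^ 2 * wedge a b := by
    intro a b c; simp [wedge, Pi.smul_apply, smul_eq_mul]; ring
  have hnsm : ∀ a : Fin 2 → ℝ, ∀ c : ℝ, vnorm (c • a) ^ 2 = c ^ 2 * vnorm a ^ 2 := by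
    intro a c; rw [vnorm_sq, vnorm_sq]; simp [Pi.smul_apply, smul_eq_mul]; ring
  have hc2 : ((vnorm w)⁻¹ : ℝ) ^ 2 ≠ 0 := pow_ne_zero 2 (inv_ne_zero hvnw)
  rw [hAw, hsm, hsm, hwsm, hnsm, mul_div_mul_left _ _ hc2, div_pow]
  have hvA : vnorm ((A j t).mulVec w) ≠ 0 := fun h => hNw1 (by rw [h]; ring)
  field_simp
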